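/- If a simplicial set X is n-coskeletal, then for every m ≥ n + 2 and every 0 ≤ k ≤ m, every horn Λ[m,k] → X has a unique filler Δ[m] → X. -/

import Mathlib

open CategoryTheory Simplicial

universe u

/-- At levels `j ≤ m - 2`, the horn inclusion is bijective. -/
lemma horn_app_bijective (m n : ℕ) (hm : n + 2 ≤ m) (k : Fin (m + 1))
    (a : SimplexCategoryᵒᵖ) (ha : a.unop.len ≤ n) :
    Function.Bijective ((SSet.horn.{u} m k).ι.app a) := by
  constructor
  · intro x y h
    exact Subtype.ext h
  · intro α
    refine ⟨⟨α, ?_⟩, rfl⟩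
    intro h
    have hsub : (Finset.univ : Finset (Fin (m + 1))) ⊆
        (Finset.image (SSet.stdSimplex.asOrderHom α) Finset.univ) ∪ {k} := by
      intro j _
      have hj : j ∈ Set.range (SSet.stdSimplex.asOrderHom α) ∪ {k} := by
        rw [h]; trivial
      rcases hj with ⟨i, hi⟩ | hj
      · exact Finset.mem_union_left _ (Finset.mem_image.2 ⟨i, Finset.mem_univ _, hi⟩)
      · exact Finset.mem_union_right _ (by simpa using hj)
    have hcard := Finset.card_le_card hsub
    have h1 : (Finset.image (SSet.stdSimplex.asOrderHom α) Finset.univ).card ≤ a.unop.len + 1 := by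
      calc (Finset.image (SSet.stdSimplex.asOrderHom α) Finset.univ).card
          ≤ (Finset.univ : Finset (Fin (a.unop.len + 1))).card := Finset.card_image_le
        _ = a.unop.len + 1 := by simp
    have h2 := Finset.card_union_le (Finset.image (SSet.stdSimplex.asOrderHom α) Finset.univ)
      ({k} : Finset (Fin (m + 1)))
    simp [Finset.card_fin] at hcard
    have : m + 1 ≤ (a.unop.len + 1) + 1 := by
      calc m + 1 ≤ _ := hcard
        _ ≤ _ + ({k} : Finset (Fin (m + 1))).card := by simpa using h2
        _ ≤ (a.unop.len + 1) + 1 := by simpa using h1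
    omega

/-- If a simplicial set `X` is `n`-coskeletal (the unit `X ⟶ cosk_n X` is an
isomorphism), then for every `m ≥ n + 2` and every `k : Fin (m+1)` (`0 ≤ k ≤ m`),
every horn `Λ[m, k] ⟶ X` has a unique filler `Δ[m] ⟶ X`. -/
theorem coskeletal_unique_horn_fillers (X : SSet.{u}) (n : ℕ)
    (hX : IsIso ((SSet.coskAdj n).unit.app X))
    (m : ℕ) (hm : n + 2 ≤ m) (k : Fin (m + 1)) (σ₀ : (Λ[m, k] : SSet.{u}) ⟶ X) :
    ∃! σ : Δ[m] ⟶ X, (SSet.horn.{u} m k).ι ≫ σ = σ₀ := by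
  set i := (SSet.horn.{u} m k).ι with hi
  have hiso : IsIso ((SSet.truncation.{u} n).map i) := by
    have : ∀ a : (SimplexCategory.Truncated n)ᵒᵖ,
        IsIso (((SSet.truncation.{u} n).map i).app a) := by
      intro a
      rw [CategoryTheory.isIso_iff_bijective]
      exact horn_app_bijective m n hm k _ a.unop.2
    exact NatIso.isIso_of_isIso_app _
  set A := (SSet.coskAdj.{u} n)
  let h : (SSet.truncation n).obj Δ[m] ⟶ (SSet.truncation n).obj X :=
    inv ((SSet.truncation.{u} n).map i) ≫ (SSet.truncation n).map σ₀
  let σ : Δ[m] ⟶ X := (A.homEquiv _ _) h ≫ inv (A.unit.app X)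
  have hunit : ∀ {B : SSet.{u}} (f : B ⟶ X),
      A.homEquiv B _ ((SSet.truncation n).map f) = f ≫ A.unit.app X := by
    intro B f
    rw [Adjunction.homEquiv_unit]
    exact (A.unit.naturality f).symm
  have hiσ : i ≫ σ = σ₀ := by
    have e1 : i ≫ σ = (A.homEquiv _ _ ((SSet.truncation n).map i ≫ h)) ≫ inv (A.unit.app X) := by
      simp only [σ, ← Category.assoc]
      rw [Adjunction.homEquiv_naturality_left]
    rw [e1]
    have e2 : (SSet.truncation n).map i ≫ h = (SSet.truncation n).map σ₀ := by
      simp [h]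
    rw [e2, hunit σ₀]
    simp
  refine ⟨σ, hiσ, ?_⟩
  · intro τ hτ
    have htrτ : (SSet.truncation n).map τ = h := by
      have e : (SSet.truncation n).map i ≫ (SSet.truncation n).map τ
          = (SSet.truncation n).map σ₀ := by
        rw [← Functor.map_comp, hτ]
      simp [h, ← e]
    have htrσ : (SSet.truncation n).map σ = h := by
      have e : (SSet.truncation n).map i ≫ (SSet.truncation n).map σ
          = (SSet.truncation n).map σ₀ := by
        rw [← Functor.map_comp, hiσ]
      simp [h, ← e]
    have h1 : τ ≫ A.unit.app X = σ ≫ A.unit.app X := by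
      rw [← hunit τ, ← hunit σ, htrτ, htrσ]
    exact (cancel_mono (A.unit.app X)).1 h1
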